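/- Let d ≥ 1 and F = F_{4^{2d+1}} (characteristic 2). There are no a, b ∈ F_4 \ {0} and x ∈ F with x^{2^{2d+1}+1} = 1, x³ ≠ 1, (a+bx)³ ≠ 1, (a+bx)³ ≠ x³, such that (a + bx)^{2^{2d+1}+1} = 1. -/
import Mathlib


/-- no three collinear points on θ₀ in the cyclic model of PG(2d,4).
Elements a with a³ = 1 are exactly the nonzero elements of the subfield F_4. -/
theorem stmt9 (d : ℕ) (hd : 1 ≤ d) (F : Type) [Field F] [Fintype F]
    (hcard : Fintype.card F = 4 ^ (2 * d + 1)) :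
    ¬ ∃ a b x : F, a ^ 3 = 1 ∧ b ^ 3 = 1 ∧
      x ^ (2 ^ (2 * d + 1) + 1) = 1 ∧ x ^ 3 ≠ 1 ∧
      (a + b * x) ^ 3 ≠ 1 ∧ (a + b * x) ^ 3 ≠ x ^ 3 ∧
      (a + b * x) ^ (2 ^ (2 * d + 1) + 1) = 1 := by
  rintro ⟨a, b, x, ha, hb, hx, hx3, -, -, hy⟩
  -- characteristic 2
  have h2 : (2 : F) = 0 := by
    have h := Nat.cast_card_eq_zero F
    rw [hcard] at h
    push_cast at h
    have h4 : (4 : F) = 2 ^ 2 := by norm_num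
    rw [h4, ← pow_mul] at h
    exact pow_eq_zero_iff (by omega : 2 * (2 * d + 1) ≠ 0) |>.mp h
  haveI : Fact (Nat.Prime 2) := ⟨Nat.prime_two⟩
  haveI hchar : CharP F 2 := (CharP.charP_iff_prime_eq_zero Nat.prime_two).2 (by exact_mod_cast h2)
  -- exponent arithmetic: 2^(2d+1) = 3k+2
  have hk : ∀ n : ℕ, ∃ k, 2 ^ (2 * n + 1) = 3 * k + 2 := by
    intro n
    induction n with
    | zero => exact ⟨0, rfl⟩
    | succ m ih =>
      obtain ⟨k, hk⟩ := ih
      exact ⟨4 * k + 2, by rw [show 2 * (m + 1) + 1 = (2 * m + 1) + 2 by ring, pow_add, hk]; ring⟩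
  obtain ⟨k, hk⟩ := hk d
  have cube_pow : ∀ c : F, c ^ 3 = 1 → c ^ (2 ^ (2 * d + 1)) = c ^ 2 := by
    intro c hc
    rw [hk, pow_add, pow_mul, hc, one_pow, one_mul]
  -- Frobenius computation
  have hxq : x ^ (2 ^ (2 * d + 1)) * x = 1 := by rw [pow_succ] at hx; exact hx
  have hfrob : (a + b * x) ^ (2 ^ (2 * d + 1)) =
      a ^ 2 + b ^ 2 * x ^ (2 ^ (2 * d + 1)) := by
    rw [add_pow_char_pow, mul_pow, cube_pow a ha, cube_pow b hb]
  have h1 : (a ^ 2 + b ^ 2 * x ^ (2 ^ (2 * d + 1))) * (a + b * x) = 1 := by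
    rw [pow_succ, hfrob] at hy
    exact hy
  obtain ⟨X, hX⟩ : ∃ X : F, x ^ (2 ^ (2 * d + 1)) = X := ⟨_, rfl⟩
  rw [hX] at hxq h1
  -- key equation: a²b·x² + x + ab² = 0
  have key : a ^ 2 * b * x ^ 2 + x + a * b ^ 2 = 0 := by
    linear_combination x * h1 - (a * b ^ 2 + b ^ 3 * x) * hxq - x * ha - x * hb
  -- rewrite with u = a²b : u x² + x + u² = 0 and u³ = 1
  have keyu : a ^ 2 * b * x ^ 2 + x + (a ^ 2 * b) ^ 2 = 0 := by
    linear_combination key + a * b ^ 2 * ha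
  have hA : (a ^ 2 * b) ^ 3 = 1 := by
    linear_combination a ^ 6 * hb + (a ^ 3 + 1) * ha
  exact hx3 (by
    linear_combination ((a ^ 2 * b) ^ 2 * x - a ^ 2 * b) * keyu -
      (x ^ 3 + a ^ 2 * b * x - 1) * hA)
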